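/- arXiv:2309.08693 — 2 statements merged into one kernel-verified Lean document; each statement's English description precedes it below -/
import Mathlib

section
/- Let $H = (V,S)$ be a signed hypergraph such that the underlying hypergraph has a $\beta$-leaf $v$, with signed edges containing $v$ given by $s_1 \subseteq s_2 \subseteq \cdots \subseteq s_k$, and suppose $S$ contains $s_i - v$ whenever $|s_i - v| \ge 2$. Let $H_1 := (V_1, S_v \cup P_v)$ with $V_1$ the underlying edge of $s_k$, $S_v = \{s_1, \dots, s_k\}$, $P_v = \{s_i - v : |s_i - v| \ge 2\}$, and let $H_2 := H - v$. If $(z_1, z_\cap) \in \mathrm{PBS}(H_1)$ and $(z'_\cap, z'_2) \in \mathrm{PBS}(H_2)$ satisfy $z_{p_i} = z'_{p_i}$ for every $i \in [k]$ (where $p_i := s_i - v$, interpreted as a coordinate or as $\sigma_{p_i}(z_u)$ when $|p_i| = 1$), then $(z_1, z'_\cap, z'_2) \in \mathrm{PBS}(H)$. -/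
open Finset

/-- A signed edge on node set `V`: an underlying edge together with a sign function
(`true` = +1, `false` = -1; only values on `edge` are relevant). -/
structure SignedEdge (V : Type*) where
  edge : Finset V
  sign : V → Bool

instance {V : Type*} [DecidableEq V] [Fintype V] : DecidableEq (SignedEdge V) :=
  fun a b =>
    decidable_of_iff (a.edge = b.edge ∧ a.sign = b.sign) (by
      constructor
      · rintro ⟨h1, h2⟩; cases a; cases b; simp_all
      · rintro rfl; exact ⟨rfl, rfl⟩)

/-- Removal of a node from a signed edge (`s - v`). -/
def SignedEdge.eraseNode {V : Type*} [DecidableEq V] (t : SignedEdge V) (v : V) :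
    SignedEdge V :=
  ⟨t.edge.erase v, t.sign⟩

/-- The pseudo-Boolean set of the signed hypergraph with node set `W` and signed edge set `S`
(edges contained in `W`), as a subset of `ℝ^W × ℝ^S`. -/
def PBS {V : Type*} [DecidableEq V] (W : Finset V) (S : Finset (SignedEdge V)) :
    Set ((↥W → ℝ) × (↥S → ℝ)) :=
  {p | (∀ v, p.1 v = 0 ∨ p.1 v = 1) ∧
    ∀ s : ↥S, p.2 s =
      ∏ v ∈ W.attach.filter (fun v => ↑v ∈ (↑s : SignedEdge V).edge),
        (if (↑s : SignedEdge V).sign ↑v then p.1 v else 1 - p.1 v)}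

variable {V : Type*} [Fintype V] [DecidableEq V]

/-- The signed edges `S_v = {s₁, …, s_k}` containing the β-leaf `v`. -/
def edgesAt (k : ℕ) (s : Fin (k + 1) → SignedEdge V) : Finset (SignedEdge V) :=
  Finset.image s Finset.univ

/-- The signed edges `P_v = {sᵢ - v : |sᵢ - v| ≥ 2}`. -/
def erasedAt (k : ℕ) (s : Fin (k + 1) → SignedEdge V) (v : V) : Finset (SignedEdge V) :=
  (Finset.univ.image fun i => (s i).eraseNode v).filter fun t => 2 ≤ t.edge.card

/-- The signed edges of `H - v`. -/
def removedEdges (S : Finset (SignedEdge V)) (v : V) : Finset (SignedEdge V) :=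
  (S.image fun t => t.eraseNode v).filter fun t => 1 ≤ t.edge.card

lemma prod_attach_filter_eq {V : Type*} [DecidableEq V] {W E : Finset V} (hE : E ⊆ W)
    (F : V → ℝ) :
    ∏ u ∈ W.attach.filter (fun u => ↑u ∈ E), F ↑u = ∏ u ∈ E, F u := by
  rw [Finset.prod_filter]
  rw [Finset.prod_attach W (fun u => if u ∈ E then F u else 1)]
  rw [← Finset.prod_filter]
  congr 1
  rw [Finset.filter_mem_eq_inter, Finset.inter_eq_right.mpr hE]

lemma prod_attach_filter_eq' {V : Type*} [DecidableEq V] {W E : Finset V} (hE : E ⊆ W)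
    (g : ↥W → ℝ) (F : V → ℝ) (hg : ∀ u : ↥W, g u = F ↑u) (sgn : V → Bool) :
    ∏ u ∈ W.attach.filter (fun u => ↑u ∈ E), (if sgn ↑u then g u else 1 - g u)
      = ∏ u ∈ E, (if sgn u then F u else 1 - F u) := by
  rw [← prod_attach_filter_eq hE (fun u => if sgn u then F u else 1 - F u)]
  exact Finset.prod_congr rfl fun u _ => by rw [hg]

/-- (Combination claim.) Let `H = (V, S)` be a signed hypergraph with a
β-leaf `v` whose signed edges containing `v` are `s₁ ⊆ ⋯ ⊆ s_k`, and with `sᵢ - v ∈ S`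
whenever `|sᵢ - v| ≥ 2`. Let `H₁ = (V₁, S_v ∪ P_v)` be the pointed part (on `V₁`, the
underlying edge of `s_k`) and `H₂ = H - v`. If a point of `PBS(H₁)` and a point of
`PBS(H₂)` agree on the values `z_{pᵢ}`, `pᵢ = sᵢ - v` (expressed as signed products, which
for `|pᵢ| ≥ 2` coincide with the respective edge coordinates), then the combined point —
taking the value at `v` and the `S_v`-coordinates from the first point and all remaining
coordinates from the second — lies in `PBS(H)`. -/
theorem stmt_8 (S : Finset (SignedEdge V)) (hcard : ∀ t ∈ S, 2 ≤ t.edge.card)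
    (v : V) (k : ℕ) (s : Fin (k + 1) → SignedEdge V)
    (hmem : ∀ i, s i ∈ S) (hv : ∀ i, v ∈ (s i).edge)
    (hchain : ∀ i j : Fin (k + 1), i ≤ j → (s i).edge ⊆ (s j).edge)
    (hexact : ∀ t ∈ S, v ∈ t.edge → ∃ i, t = s i)
    (hclosed : ∀ i, 2 ≤ ((s i).edge.erase v).card → (s i).eraseNode v ∈ S)
    (a : (↥((s (Fin.last k)).edge) → ℝ) × (↥(edgesAt k s ∪ erasedAt k s v) → ℝ))
    (ha : a ∈ PBS ((s (Fin.last k)).edge) (edgesAt k s ∪ erasedAt k s v))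
    (b : (↥(Finset.univ.erase v) → ℝ) × (↥(removedEdges S v) → ℝ))
    (hb : b ∈ PBS (Finset.univ.erase v) (removedEdges S v))
    (hagree : ∀ i : Fin (k + 1),
      (∏ u ∈ ((s (Fin.last k)).edge).attach.filter
          (fun u => ↑u ∈ (s i).edge.erase v),
        (if (s i).sign ↑u then a.1 u else 1 - a.1 u)) =
      ∏ u ∈ (Finset.univ.erase v).attach.filter
          (fun u => ↑u ∈ (s i).edge.erase v),
        (if (s i).sign ↑u then b.1 u else 1 - b.1 u)) :
    ∃ c ∈ PBS (Finset.univ : Finset V) S,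
      (∀ hv1 : v ∈ (s (Fin.last k)).edge,
        c.1 ⟨v, Finset.mem_univ v⟩ = a.1 ⟨v, hv1⟩) ∧
      (∀ u, ∀ hu : u ∈ Finset.univ.erase v,
        c.1 ⟨u, Finset.mem_univ u⟩ = b.1 ⟨u, hu⟩) ∧
      (∀ t, ∀ ht : t ∈ S, ∀ ht1 : t ∈ edgesAt k s ∪ erasedAt k s v,
        v ∈ t.edge → c.2 ⟨t, ht⟩ = a.2 ⟨t, ht1⟩) ∧
      (∀ t, ∀ ht : t ∈ S, ∀ ht2 : t ∈ removedEdges S v,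
        v ∉ t.edge → c.2 ⟨t, ht⟩ = b.2 ⟨t, ht2⟩) := by
  classical
  have hvV1 : v ∈ (s (Fin.last k)).edge := hv (Fin.last k)
  set aext : V → ℝ := fun u => if h : u ∈ (s (Fin.last k)).edge then a.1 ⟨u, h⟩ else 0 with haext
  set bext : V → ℝ :=
    fun u => if h : u ∈ Finset.univ.erase v then b.1 ⟨u, h⟩ else 0 with hbext
  set cfun : V → ℝ := fun u => if u = v then a.1 ⟨v, hvV1⟩ else bext u with hcfun
  have hA : ∀ u : ↥(s (Fin.last k)).edge, a.1 u = aext ↑u := by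
    rintro ⟨x, hx⟩; simp [haext, hx]
  have hB : ∀ u : ↥(Finset.univ.erase v), b.1 u = bext ↑u := by
    rintro ⟨x, hx⟩
    have hne := (Finset.mem_erase.mp hx).1
    simp [hbext, hne, hx]
  have hCB : ∀ u : V, u ≠ v → cfun u = bext u := by
    intro u hu; simp [hcfun, hu]
  set c : ((↥(Finset.univ : Finset V) → ℝ) × (↥S → ℝ)) := ⟨fun u => cfun u.1,
    fun t => ∏ u ∈ Finset.univ.attach.filter
        (fun u => u.1 ∈ (↑t : SignedEdge V).edge),
      (if (↑t : SignedEdge V).sign u.1 then cfun u.1 else 1 - cfun u.1)⟩ with hc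
  refine ⟨c, ⟨?_, fun _ => rfl⟩, ?_, ?_, ?_, ?_⟩
  · -- 0/1 values
    intro u
    by_cases h : (u : V) = v
    · simp only [hc, hcfun, h, if_pos rfl]
      exact ha.1 _
    · have hmem' : (u : V) ∈ Finset.univ.erase v := Finset.mem_erase.mpr ⟨h, Finset.mem_univ _⟩
      simp only [hc, hcfun, hbext, if_neg h, dif_pos hmem']
      exact hb.1 _
  · -- value at v
    intro hv1
    simp [hc, hcfun]
  · -- values away from v
    intro u hu
    have hne : u ≠ v := (Finset.mem_erase.mp hu).1
    simp [hc, hcfun, hbext, hne, hu]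
  · -- edges containing v
    intro t ht ht1 htv
    obtain ⟨i, rfl⟩ := hexact t ht htv
    have hsub : (s i).edge ⊆ (s (Fin.last k)).edge := hchain i (Fin.last k) (Fin.le_last i)
    have hsubE : (s i).edge.erase v ⊆ (s (Fin.last k)).edge := (Finset.erase_subset v _).trans hsub
    have hsubE' : (s i).edge.erase v ⊆ Finset.univ.erase v :=
      Finset.erase_subset_erase v (Finset.subset_univ _)
    have ha2 := ha.2 ⟨s i, ht1⟩
    have hlhs : (∏ u ∈ Finset.univ.attach.filter
          (fun u : ↥(Finset.univ : Finset V) => u.1 ∈ (s i).edge),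
        (if (s i).sign u.1 then cfun u.1 else 1 - cfun u.1))
        = ∏ u ∈ (s i).edge, (if (s i).sign u then cfun u else 1 - cfun u) :=
      prod_attach_filter_eq' (E := (s i).edge) (Finset.subset_univ _)
        (fun u => cfun u.1) cfun (fun _ => rfl) (s i).sign
    have hrhs : a.2 ⟨s i, ht1⟩
        = ∏ u ∈ (s i).edge, (if (s i).sign u then aext u else 1 - aext u) := by
      rw [ha2]
      exact prod_attach_filter_eq' hsub _ _ hA _
    show (∏ u ∈ Finset.univ.attach.filter
          (fun u : ↥(Finset.univ : Finset V) => u.1 ∈ (s i).edge),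
        (if (s i).sign u.1 then cfun u.1 else 1 - cfun u.1)) = a.2 ⟨s i, ht1⟩
    rw [hlhs, hrhs, ← Finset.mul_prod_erase _ _ htv, ← Finset.mul_prod_erase _ _ htv]
    have hcv : cfun v = aext v := by simp [hcfun, haext, hvV1]
    have hag := hagree i
    rw [prod_attach_filter_eq' hsubE _ _ hA _,
        prod_attach_filter_eq' hsubE' _ _ hB _] at hag
    rw [hcv]
    congr 1
    calc ∏ u ∈ (s i).edge.erase v, (if (s i).sign u then cfun u else 1 - cfun u)
        = ∏ u ∈ (s i).edge.erase v, (if (s i).sign u then bext u else 1 - bext u) :=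
          Finset.prod_congr rfl fun u hu => by
            rw [hCB u (Finset.mem_erase.mp hu).1]
      _ = _ := hag.symm
  · -- edges not containing v
    intro t ht ht2 htv
    have hsub : t.edge ⊆ Finset.univ.erase v := fun u hu =>
      Finset.mem_erase.mpr ⟨fun h => htv (h ▸ hu), Finset.mem_univ _⟩
    have hb2 := hb.2 ⟨t, ht2⟩
    have hrhs : b.2 ⟨t, ht2⟩
        = ∏ u ∈ t.edge, (if t.sign u then bext u else 1 - bext u) := by
      rw [hb2]
      exact prod_attach_filter_eq' hsub _ _ hB _
    have hlhs : (∏ u ∈ Finset.univ.attach.filter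
          (fun u : ↥(Finset.univ : Finset V) => u.1 ∈ t.edge),
        (if t.sign u.1 then cfun u.1 else 1 - cfun u.1))
        = ∏ u ∈ t.edge, (if t.sign u then cfun u else 1 - cfun u) :=
      prod_attach_filter_eq' (E := t.edge) (Finset.subset_univ _)
        (fun u => cfun u.1) cfun (fun _ => rfl) t.sign
    show (∏ u ∈ Finset.univ.attach.filter
          (fun u : ↥(Finset.univ : Finset V) => u.1 ∈ t.edge),
        (if t.sign u.1 then cfun u.1 else 1 - cfun u.1)) = b.2 ⟨t, ht2⟩
    rw [hlhs, hrhs]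
    exact Finset.prod_congr rfl fun u hu => by
      rw [hCB u (Finset.mem_erase.mp (hsub hu)).1]
end

section
/- Under the hypotheses of the decomposition theorem for signed hypergraphs with a $\beta$-leaf $v$ (signed edges $s_1 \subseteq \cdots \subseteq s_k$ containing $v$, with $s_i - v \in S$ whenever $|s_i - v| \ge 2$, $H_1$ the pointed part and $H_2 = H - v$), the pseudo-Boolean polytope $\mathrm{PBP}(H)$ is decomposable into $\mathrm{PBP}(H_1)$ and $\mathrm{PBP}(H_2)$: whenever $(z^1, z^\cap) \in \mathrm{PBP}(H_1)$ and $(z^\cap, z^2) \in \mathrm{PBP}(H_2)$, the combined vector $(z^1, z^\cap, z^2)$ lies in $\mathrm{PBP}(H)$. -/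
open Finset

variable {V : Type*} [Fintype V] [DecidableEq V]

section Aux

open Classical in
noncomputable def ind01 (p : Prop) : ℝ := if p then 1 else 0

lemma ind01_of {p : Prop} (h : p) : ind01 p = 1 := by simp [ind01, h]

lemma ind01_of_not {p : Prop} (h : ¬ p) : ind01 p = 0 := by simp [ind01, h]

lemma ind01_nonneg (p : Prop) : 0 ≤ ind01 p := by
  by_cases h : p <;> simp [ind01_of, ind01_of_not, h]

lemma ind01_le_one (p : Prop) : ind01 p ≤ 1 := by
  by_cases h : p <;> simp [ind01_of, ind01_of_not, h]

lemma ind01_congr {p q : Prop} (h : p ↔ q) : ind01 p = ind01 q := by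
  by_cases hp : p
  · rw [ind01_of hp, ind01_of (h.1 hp)]
  · rw [ind01_of_not hp, ind01_of_not (fun hq => hp (h.2 hq))]

lemma ind01_mul (p q : Prop) : ind01 p * ind01 q = ind01 (p ∧ q) := by
  by_cases hp : p <;> by_cases hq : q <;>
    simp [ind01_of, ind01_of_not, hp, hq]

lemma ind01_not (p : Prop) : ind01 (¬ p) = 1 - ind01 p := by
  by_cases hp : p <;> simp [ind01_of, ind01_of_not, hp]

lemma ind01_prod {ι : Type*} (e : Finset ι) (p : ι → Prop) :
    ∏ u ∈ e, ind01 (p u) = ind01 (∀ u ∈ e, p u) := by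
  classical
  induction e using Finset.induction_on with
  | empty => simp [ind01_of]
  | insert _ _ hnotmem ih =>
    rename_i a e'
    rw [Finset.prod_insert hnotmem, ih, ind01_mul]
    exact ind01_congr (by simp [Finset.forall_mem_insert])

lemma group_sum {ι β : Type*} [Fintype β] (t : Finset ι) (w : ι → ℝ) (gg : ι → β)
    (φ : β → ℝ) :
    ∑ i ∈ t, w i * φ (gg i) = ∑ o : β, (∑ i ∈ t, w i * ind01 (gg i = o)) * φ o := by
  classical
  have : ∀ o : β, (∑ i ∈ t, w i * ind01 (gg i = o)) * φ o
      = ∑ i ∈ t, w i * ind01 (gg i = o) * φ o := by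
    intro o; rw [Finset.sum_mul]
  simp_rw [this]
  rw [Finset.sum_comm]
  refine Finset.sum_congr rfl fun i _ => ?_
  rw [Finset.sum_eq_single (gg i)]
  · rw [ind01_of rfl]; ring
  · intro o _ ho; rw [ind01_of_not (fun h => ho h.symm)]; ring
  · intro h; exact absurd (Finset.mem_univ _) h

lemma core_incl_excl {α ι₁ ι₂ : Type*} {n : ℕ} (P : Fin n → α → Prop)
    (hlam : ∀ i j : Fin n, i ≤ j → (∀ x, P j x → P i x) ∨ ∀ x, ¬ (P i x ∧ P j x))
    (ta : Finset ι₁) (tb : Finset ι₂) (wa : ι₁ → ℝ) (wb : ι₂ → ℝ)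
    (xa : ι₁ → α) (xb : ι₂ → α)
    (hbase : ∀ i, ∑ i' ∈ ta, wa i' * ind01 (P i (xa i'))
      = ∑ j ∈ tb, wb j * ind01 (P i (xb j)))
    (I : Finset (Fin n)) :
    ∑ i' ∈ ta, wa i' * ind01 (∃ i ∈ I, P i (xa i'))
      = ∑ j ∈ tb, wb j * ind01 (∃ i ∈ I, P i (xb j)) := by
  classical
  induction I using Finset.strongInduction with
  | _ I IH =>
    rcases I.eq_empty_or_nonempty with rfl | hne
    · simp [ind01_of_not]
    · set j := I.min' hne with hjdef
      have hjI : j ∈ I := I.min'_mem hne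
      set I' := I.erase j with hI'def
      set I'' := I'.filter (fun i => ∀ x, P i x → P j x) with hI''def
      have key : ∀ x : α, ind01 (∃ i ∈ I, P i x)
          = ind01 (P j x) + ind01 (∃ i ∈ I', P i x) - ind01 (∃ i ∈ I'', P i x) := by
        intro x
        by_cases hj : P j x
        · have hiff : (∃ i ∈ I', P i x) ↔ (∃ i ∈ I'', P i x) := by
            constructor
            · rintro ⟨i, hi, hp⟩
              have hij : j ≤ i := I.min'_le i (Finset.mem_of_mem_erase hi)
              rcases hlam j i hij with hc | hd
              · exact ⟨i, Finset.mem_filter.2 ⟨hi, hc⟩, hp⟩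
              · exact absurd ⟨hj, hp⟩ (hd x)
            · rintro ⟨i, hi, hp⟩
              exact ⟨i, Finset.mem_of_mem_filter _ hi, hp⟩
          rw [ind01_of hj, ind01_of (⟨j, hjI, hj⟩ : ∃ i ∈ I, P i x), ind01_congr hiff]
          ring
        · have h'' : ¬ ∃ i ∈ I'', P i x := by
            rintro ⟨i, hi, hp⟩
            exact hj ((Finset.mem_filter.1 hi).2 x hp)
          have hiff : (∃ i ∈ I, P i x) ↔ (∃ i ∈ I', P i x) := by
            constructor
            · rintro ⟨i, hi, hp⟩
              refine ⟨i, Finset.mem_erase.2 ⟨?_, hi⟩, hp⟩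
              rintro rfl; exact hj hp
            · rintro ⟨i, hi, hp⟩
              exact ⟨i, Finset.mem_of_mem_erase hi, hp⟩
          rw [ind01_of_not hj, ind01_of_not h'', ind01_congr hiff]
          ring
      have hsub' : I' ⊂ I := Finset.erase_ssubset hjI
      have hsub'' : I'' ⊂ I := lt_of_le_of_lt (Finset.filter_subset _ _) hsub'
      have ea : ∑ i' ∈ ta, wa i' * ind01 (∃ i ∈ I, P i (xa i'))
          = (∑ i' ∈ ta, wa i' * ind01 (P j (xa i')))
            + (∑ i' ∈ ta, wa i' * ind01 (∃ i ∈ I', P i (xa i')))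
            - (∑ i' ∈ ta, wa i' * ind01 (∃ i ∈ I'', P i (xa i'))) := by
        rw [← Finset.sum_add_distrib, ← Finset.sum_sub_distrib]
        exact Finset.sum_congr rfl fun i' _ => by rw [key (xa i')]; ring
      have eb : ∑ j' ∈ tb, wb j' * ind01 (∃ i ∈ I, P i (xb j'))
          = (∑ j' ∈ tb, wb j' * ind01 (P j (xb j')))
            + (∑ j' ∈ tb, wb j' * ind01 (∃ i ∈ I', P i (xb j')))
            - (∑ j' ∈ tb, wb j' * ind01 (∃ i ∈ I'', P i (xb j'))) := by
        rw [← Finset.sum_add_distrib, ← Finset.sum_sub_distrib]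
        exact Finset.sum_congr rfl fun j' _ => by rw [key (xb j')]; ring
      rw [ea, eb, hbase j, IH I' hsub', IH I'' hsub'']

end Aux

section Aux2

variable {V : Type*} [Fintype V] [DecidableEq V]

lemma prod_conv (W e : Finset V) (he : e ⊆ W) (sgn : V → Bool)
    (q : ↥W → ℝ) (x : V → Bool) (hq : ∀ u : ↥W, q u = ind01 (x ↑u = true)) :
    ∏ u ∈ W.attach.filter (fun u => ↑u ∈ e), (if sgn ↑u then q u else 1 - q u)
      = ind01 (∀ u ∈ e, x u = sgn u) := by
  classical
  rw [Finset.prod_filter]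
  have h1 : ∀ u : ↥W, (if (↑u : V) ∈ e then (if sgn ↑u then q u else 1 - q u) else 1)
      = (if (↑u : V) ∈ e then ind01 (x ↑u = sgn ↑u) else 1) := by
    intro u
    by_cases hue : (↑u : V) ∈ e
    · rw [if_pos hue, if_pos hue, hq u]
      cases hsgn : sgn ↑u
      · rw [if_neg (by simp [hsgn]), ← ind01_not]
        exact ind01_congr (by simp)
      · rw [if_pos rfl]
    · rw [if_neg hue, if_neg hue]
  rw [Finset.prod_congr rfl (fun u _ => h1 u)]
  rw [Finset.prod_attach W (fun u => if u ∈ e then ind01 (x u = sgn u) else 1)]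
  rw [← Finset.prod_filter]
  have h2 : W.filter (fun u => u ∈ e) = e := by
    ext u; simp only [Finset.mem_filter]
    exact ⟨fun h => h.2, fun h => ⟨he h, h⟩⟩
  rw [h2, ind01_prod]

noncomputable def ptPBS (W : Finset V) (S' : Finset (SignedEdge V)) (x : V → Bool) :
    (↥W → ℝ) × (↥S' → ℝ) :=
  (fun u => ind01 (x ↑u = true),
   fun t => ind01 (∀ u ∈ (↑t : SignedEdge V).edge, x u = (↑t : SignedEdge V).sign u))

lemma ptPBS_mem (W : Finset V) (S' : Finset (SignedEdge V))
    (hWS' : ∀ t ∈ S', t.edge ⊆ W) (x : V → Bool) : ptPBS W S' x ∈ PBS W S' := by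
  constructor
  · intro u
    by_cases h : x ↑u = true
    · right; exact ind01_of h
    · left; exact ind01_of_not h
  · intro t
    exact (prod_conv W _ (hWS' _ t.2) _ _ x (fun u => rfl)).symm

lemma cm_pt (W : Finset V) (S' : Finset (SignedEdge V)) {ι : Type*} (t : Finset ι)
    (w : ι → ℝ) (hw1 : ∑ i ∈ t, w i = 1) (x : ι → V → Bool) :
    t.centerMass w (fun i => ptPBS W S' (x i)) =
      (fun (u : ↥W) => ∑ i ∈ t, w i * ind01 (x i ↑u = true),
       fun (e : ↥S') => ∑ i ∈ t, w i * ind01 (∀ u ∈ (↑e : SignedEdge V).edge,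
         x i u = (↑e : SignedEdge V).sign u)) := by
  rw [Finset.centerMass_eq_of_sum_1 _ _ hw1]
  refine Prod.ext ?_ ?_
  · rw [Prod.fst_sum]
    funext u
    rw [Finset.sum_apply]
    exact Finset.sum_congr rfl fun i _ => by simp [ptPBS, smul_eq_mul]
  · rw [Prod.snd_sum]
    funext e
    rw [Finset.sum_apply]
    exact Finset.sum_congr rfl fun i _ => by simp [ptPBS, smul_eq_mul]

lemma extractPBS {W : Finset V} {S' : Finset (SignedEdge V)}
    (hWS' : ∀ t ∈ S', t.edge ⊆ W)
    {a : (↥W → ℝ) × (↥S' → ℝ)} (ha : a ∈ convexHull ℝ (PBS W S')) :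
    ∃ (ι : Type) (t : Finset ι) (w : ι → ℝ) (x : ι → V → Bool),
      (∀ i ∈ t, 0 ≤ w i) ∧ (∑ i ∈ t, w i = 1) ∧
      (∀ u (hu : u ∈ W), a.1 ⟨u, hu⟩ = ∑ i ∈ t, w i * ind01 (x i u = true)) ∧
      (∀ e (he : e ∈ S'), a.2 ⟨e, he⟩
        = ∑ i ∈ t, w i * ind01 (∀ u ∈ e.edge, x i u = e.sign u)) := by
  classical
  rw [_root_.convexHull_eq] at ha
  obtain ⟨ι, t, w, z, hw0, hw1, hz, hcm⟩ := ha
  set x : ι → V → Bool := fun i u => if h : u ∈ W then decide ((z i).1 ⟨u, h⟩ = 1) else false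
    with hxdef
  have hq : ∀ i ∈ t, ∀ u : ↥W, (z i).1 u = ind01 (x i ↑u = true) := by
    intro i hi u
    have hx : x i ↑u = decide ((z i).1 ⟨↑u, u.2⟩ = 1) := dif_pos u.2
    have hu : (⟨↑u, u.2⟩ : ↥W) = u := rfl
    rcases (hz i hi).1 u with h0 | h1
    · rw [h0, ind01_of_not]
      rw [hx, hu, h0]
      simp
    · rw [h1, ind01_of]
      rw [hx, hu, h1]
      simp
  have hzpt : ∀ i ∈ t, z i = ptPBS W S' (x i) := by
    intro i hi
    refine Prod.ext ?_ ?_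
    · funext u; exact hq i hi u
    · funext e
      rw [(hz i hi).2 e]
      exact prod_conv W _ (hWS' _ e.2) _ _ (x i) (hq i hi)
  have hcm' : a = t.centerMass w (fun i => ptPBS W S' (x i)) := by
    rw [← hcm, Finset.centerMass_eq_of_sum_1 _ _ hw1, Finset.centerMass_eq_of_sum_1 _ _ hw1]
    exact Finset.sum_congr rfl fun i hi => by rw [hzpt i hi]
  rw [cm_pt W S' t w hw1 x] at hcm'
  refine ⟨ι, t, w, x, hw0, hw1, ?_, ?_⟩
  · intro u hu; rw [hcm']
  · intro e he; rw [hcm']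

end Aux2

/-- (Decomposition theorem.) Let `H = (V, S)` be a signed hypergraph with a
β-leaf `v` whose signed edges containing `v` are `s₁ ⊆ ⋯ ⊆ s_k`, and with `sᵢ - v ∈ S`
whenever `|sᵢ - v| ≥ 2`. Let `H₁ = (V₁, S_v ∪ P_v)` (with `V₁` the underlying edge of `s_k`)
and `H₂ = H - v`. Whenever a point of `PBP(H₁)` and a point of `PBP(H₂)` agree on all shared
coordinates, the combined vector lies in `PBP(H)`; i.e., `PBP(H)` is decomposable into
`PBP(H₁)` and `PBP(H₂)`. -/
theorem stmt_9 (S : Finset (SignedEdge V)) (hcard : ∀ t ∈ S, 2 ≤ t.edge.card)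
    (v : V) (k : ℕ) (s : Fin (k + 1) → SignedEdge V)
    (hmem : ∀ i, s i ∈ S) (hv : ∀ i, v ∈ (s i).edge)
    (hchain : ∀ i j : Fin (k + 1), i ≤ j → (s i).edge ⊆ (s j).edge)
    (hexact : ∀ t ∈ S, v ∈ t.edge → ∃ i, t = s i)
    (hclosed : ∀ i, 2 ≤ ((s i).edge.erase v).card → (s i).eraseNode v ∈ S)
    (a : (↥((s (Fin.last k)).edge) → ℝ) × (↥(edgesAt k s ∪ erasedAt k s v) → ℝ))
    (ha : a ∈ convexHull ℝ (PBS ((s (Fin.last k)).edge) (edgesAt k s ∪ erasedAt k s v)))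
    (b : (↥(Finset.univ.erase v) → ℝ) × (↥(removedEdges S v) → ℝ))
    (hb : b ∈ convexHull ℝ (PBS (Finset.univ.erase v) (removedEdges S v)))
    (hshareNodes : ∀ u, ∀ h1 : u ∈ (s (Fin.last k)).edge, ∀ h2 : u ∈ Finset.univ.erase v,
      a.1 ⟨u, h1⟩ = b.1 ⟨u, h2⟩)
    (hshareEdges : ∀ t, ∀ h1 : t ∈ edgesAt k s ∪ erasedAt k s v,
      ∀ h2 : t ∈ removedEdges S v, a.2 ⟨t, h1⟩ = b.2 ⟨t, h2⟩) :
    ∃ c ∈ convexHull ℝ (PBS (Finset.univ : Finset V) S),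
      (∀ u, ∀ h1 : u ∈ (s (Fin.last k)).edge,
        c.1 ⟨u, Finset.mem_univ u⟩ = a.1 ⟨u, h1⟩) ∧
      (∀ u, ∀ h2 : u ∈ Finset.univ.erase v,
        c.1 ⟨u, Finset.mem_univ u⟩ = b.1 ⟨u, h2⟩) ∧
      (∀ t, ∀ ht : t ∈ S, ∀ h1 : t ∈ edgesAt k s ∪ erasedAt k s v,
        c.2 ⟨t, ht⟩ = a.2 ⟨t, h1⟩) ∧
      (∀ t, ∀ ht : t ∈ S, ∀ h2 : t ∈ removedEdges S v,
        c.2 ⟨t, ht⟩ = b.2 ⟨t, h2⟩) := by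
  classical
  -- edge-containment facts for the three hypergraphs
  have hWS1 : ∀ t ∈ edgesAt k s ∪ erasedAt k s v, t.edge ⊆ (s (Fin.last k)).edge := by
    intro t ht
    rcases Finset.mem_union.1 ht with ht | ht
    · obtain ⟨i, -, rfl⟩ := Finset.mem_image.1 ht
      exact hchain i (Fin.last k) (Fin.le_last i)
    · obtain ⟨hti, -⟩ := Finset.mem_filter.1 ht
      obtain ⟨i, -, rfl⟩ := Finset.mem_image.1 hti
      exact fun u hu => hchain i (Fin.last k) (Fin.le_last i) (Finset.mem_of_mem_erase hu)
  have hWS2 : ∀ t ∈ removedEdges S v, t.edge ⊆ Finset.univ.erase v := by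
    intro t ht
    obtain ⟨hti, -⟩ := Finset.mem_filter.1 ht
    obtain ⟨t', -, rfl⟩ := Finset.mem_image.1 hti
    exact fun u hu => Finset.mem_erase.2 ⟨(Finset.mem_erase.1 hu).1, Finset.mem_univ u⟩
  have hWS : ∀ t ∈ S, t.edge ⊆ (Finset.univ : Finset V) := fun t _ u _ => Finset.mem_univ u
  obtain ⟨ι₁, ta, wa, xa, hwa0, hwa1, ha1, ha2⟩ := extractPBS hWS1 ha
  obtain ⟨ι₂, tb, wb, xb, hwb0, hwb1, hb1, hb2⟩ := extractPBS hWS2 hb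
  -- the chain of events
  set e : Fin (k+1) → Finset V := fun i => (s i).edge.erase v with hedef
  set F : Fin (k+1) → (V → Bool) → Prop := fun i x => ∀ u ∈ e i, x u = (s i).sign u with hFdef
  have hemono : ∀ i j : Fin (k+1), i ≤ j → e i ⊆ e j := fun i j hij =>
    Finset.erase_subset_erase v (hchain i j hij)
  set g : (V → Bool) → Option (Fin (k+1)) := fun x =>
    if h : (Finset.univ.filter fun i => F i x).Nonempty
    then some ((Finset.univ.filter fun i => F i x).max' h) else none with hgdef
  have hg_some : ∀ (x : V → Bool) (j : Fin (k+1)),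
      g x = some j ↔ (F j x ∧ ∀ i, F i x → i ≤ j) := by
    intro x j
    constructor
    · intro h
      simp only [hgdef] at h
      by_cases hne : (Finset.univ.filter fun i => F i x).Nonempty
      · rw [dif_pos hne] at h
        have hj := Option.some.inj h
        constructor
        · have hm := Finset.max'_mem _ hne
          rw [hj] at hm
          exact (Finset.mem_filter.1 hm).2
        · intro i hFi
          rw [← hj]
          exact Finset.le_max' _ i (Finset.mem_filter.2 ⟨Finset.mem_univ i, hFi⟩)
      · rw [dif_neg hne] at h; exact absurd h (by simp)
    · rintro ⟨hFj, hmax⟩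
      have hne : (Finset.univ.filter fun i => F i x).Nonempty :=
        ⟨j, Finset.mem_filter.2 ⟨Finset.mem_univ j, hFj⟩⟩
      simp only [hgdef]
      rw [dif_pos hne]
      congr 1
      exact le_antisymm
        (Finset.max'_le _ _ _ (fun i hi => hmax i (Finset.mem_filter.1 hi).2))
        (Finset.le_max' _ _ (Finset.mem_filter.2 ⟨Finset.mem_univ j, hFj⟩))
  have hg_none : ∀ x : V → Bool, g x = none ↔ ∀ i, ¬ F i x := by
    intro x
    by_cases hne : (Finset.univ.filter fun i => F i x).Nonempty
    · simp only [hgdef]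
      rw [dif_pos hne]
      constructor
      · intro h; exact absurd h (by simp)
      · intro h
        obtain ⟨i, hi⟩ := hne
        exact absurd (Finset.mem_filter.1 hi).2 (h i)
    · simp only [hgdef]
      rw [dif_neg hne]
      exact ⟨fun _ i hFi => hne ⟨i, Finset.mem_filter.2 ⟨Finset.mem_univ i, hFi⟩⟩,
        fun _ => rfl⟩
  set Good : Fin (k+1) → Option (Fin (k+1)) → Prop :=
    fun i o => o.elim False (fun j => i ≤ j ∧ ∀ u ∈ e i, (s i).sign u = (s j).sign u)
    with hGooddef
  have hFg : ∀ (i : Fin (k+1)) (x : V → Bool), F i x ↔ Good i (g x) := by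
    intro i x
    rcases hx : g x with _ | j
    · rw [hg_none] at hx
      simp only [hGooddef, Option.elim]
      exact iff_of_false (hx i) not_false
    · rw [hg_some] at hx
      obtain ⟨hFj, hmax⟩ := hx
      simp only [hGooddef, Option.elim]
      constructor
      · intro hFi
        refine ⟨hmax i hFi, fun u hu => ?_⟩
        rw [← hFi u hu]
        exact hFj u (hemono i j (hmax i hFi) hu)
      · rintro ⟨hij, hQ⟩ u hu
        rw [hFj u (hemono i j hij hu)]
        exact (hQ u hu).symm
  have hlamF : ∀ i j : Fin (k+1), i ≤ j →
      (∀ x, F j x → F i x) ∨ ∀ x, ¬ (F i x ∧ F j x) := by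
    intro i j hij
    by_cases hq : ∀ u ∈ e i, (s i).sign u = (s j).sign u
    · left
      intro x hFj u hu
      rw [hFj u (hemono i j hij hu)]
      exact (hq u hu).symm
    · right
      push_neg at hq
      obtain ⟨u, hu, hne⟩ := hq
      rintro x ⟨hFi, hFj⟩
      exact hne ((hFi u hu).symm.trans (hFj u (hemono i j hij hu)))
  -- ind01 on bools
  have hbf : ∀ bo : Bool, ind01 (bo = false) = 1 - ind01 (bo = true) := by
    intro bo; cases bo <;> simp [ind01_of, ind01_of_not]
  -- agreement of the two vectors on each chain event
  have hbase : ∀ i : Fin (k+1),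
      ∑ i' ∈ ta, wa i' * ind01 (F i (xa i')) = ∑ j ∈ tb, wb j * ind01 (F i (xb j)) := by
    intro i
    have hc2' : 2 ≤ (s i).edge.card := hcard _ (hmem i)
    have hc1' : 1 ≤ (e i).card := by
      have : (e i).card = (s i).edge.card - 1 := Finset.card_erase_of_mem (hv i)
      omega
    by_cases h2 : 2 ≤ (e i).card
    · have h1mem : (s i).eraseNode v ∈ edgesAt k s ∪ erasedAt k s v :=
        Finset.mem_union_right _ (Finset.mem_filter.2
          ⟨Finset.mem_image.2 ⟨i, Finset.mem_univ i, rfl⟩, h2⟩)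
      have h2mem : (s i).eraseNode v ∈ removedEdges S v :=
        Finset.mem_filter.2 ⟨Finset.mem_image.2 ⟨s i, hmem i, rfl⟩, le_trans one_le_two h2⟩
      have hsh := hshareEdges _ h1mem h2mem
      rw [ha2 _ h1mem, hb2 _ h2mem] at hsh
      exact hsh
    · have hcone : (e i).card = 1 := by omega
      obtain ⟨u, hu⟩ := Finset.card_eq_one.1 hcone
      have hu1 : u ∈ e i := by rw [hu]; exact Finset.mem_singleton_self u
      have huv : u ≠ v := (Finset.mem_erase.1 hu1).1
      have huV1 : u ∈ (s (Fin.last k)).edge :=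
        hchain i (Fin.last k) (Fin.le_last i) (Finset.mem_of_mem_erase hu1)
      have huW2 : u ∈ Finset.univ.erase v := Finset.mem_erase.2 ⟨huv, Finset.mem_univ u⟩
      have hnode := hshareNodes u huV1 huW2
      rw [ha1 u huV1, hb1 u huW2] at hnode
      have hFsing : ∀ y : V → Bool, F i y ↔ y u = (s i).sign u := by
        intro y
        simp only [hFdef, hu, Finset.mem_singleton]
        exact ⟨fun h => h u rfl, fun h u' hu' => hu' ▸ h⟩
      cases hsv : (s i).sign u
      · have : ∀ y : V → Bool, ind01 (F i y) = 1 - ind01 (y u = true) := by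
          intro y
          rw [ind01_congr (hFsing y), hsv, hbf]
        calc ∑ i' ∈ ta, wa i' * ind01 (F i (xa i'))
            = ∑ i' ∈ ta, (wa i' - wa i' * ind01 (xa i' u = true)) := by
              refine Finset.sum_congr rfl fun i' _ => ?_
              rw [this (xa i')]; ring
          _ = 1 - ∑ i' ∈ ta, wa i' * ind01 (xa i' u = true) := by
              rw [Finset.sum_sub_distrib, hwa1]
          _ = 1 - ∑ j ∈ tb, wb j * ind01 (xb j u = true) := by rw [hnode]
          _ = ∑ j ∈ tb, (wb j - wb j * ind01 (xb j u = true)) := by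
              rw [Finset.sum_sub_distrib, hwb1]
          _ = ∑ j ∈ tb, wb j * ind01 (F i (xb j)) := by
              refine Finset.sum_congr rfl fun j _ => ?_
              rw [this (xb j)]; ring
      · have : ∀ y : V → Bool, ind01 (F i y) = ind01 (y u = true) := by
          intro y
          rw [ind01_congr (hFsing y), hsv]
        calc ∑ i' ∈ ta, wa i' * ind01 (F i (xa i'))
            = ∑ i' ∈ ta, wa i' * ind01 (xa i' u = true) := by
              refine Finset.sum_congr rfl fun i' _ => ?_; rw [this (xa i')]
          _ = ∑ j ∈ tb, wb j * ind01 (xb j u = true) := hnode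
          _ = ∑ j ∈ tb, wb j * ind01 (F i (xb j)) := by
              refine Finset.sum_congr rfl fun j _ => ?_; rw [this (xb j)]
  have hU := core_incl_excl F hlamF ta tb wa wb xa xb hbase
  -- the grouped weights
  set L : Option (Fin (k+1)) → ℝ := fun o => ∑ i' ∈ ta, wa i' * ind01 (g (xa i') = o)
    with hLdef
  set Pv : Option (Fin (k+1)) → ℝ :=
    fun o => ∑ i' ∈ ta, wa i' * ind01 (xa i' v = true) * ind01 (g (xa i') = o) with hPvdef
  set M : Option (Fin (k+1)) → ℝ := fun o => ∑ j ∈ tb, wb j * ind01 (g (xb j) = o)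
    with hMdef
  set R : Option (Fin (k+1)) → ℝ := fun o => if L o = 0 then 0 else Pv o / L o with hRdef
  have hga : ∀ φ : Option (Fin (k+1)) → ℝ,
      ∑ i' ∈ ta, wa i' * ind01 (xa i' v = true) * φ (g (xa i')) = ∑ o, Pv o * φ o := by
    intro φ
    simp only [hPvdef]
    exact group_sum ta (fun i' => wa i' * ind01 (xa i' v = true)) (fun i' => g (xa i')) φ
  have hgaL : ∀ φ : Option (Fin (k+1)) → ℝ,
      ∑ i' ∈ ta, wa i' * φ (g (xa i')) = ∑ o, L o * φ o := by
    intro φ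
    simp only [hLdef]
    exact group_sum ta wa (fun i' => g (xa i')) φ
  have hgb : ∀ φ : Option (Fin (k+1)) → ℝ,
      ∑ j ∈ tb, wb j * φ (g (xb j)) = ∑ o, M o * φ o := by
    intro φ
    simp only [hMdef]
    exact group_sum tb wb (fun j => g (xb j)) φ
  have hL0 : ∀ o, 0 ≤ L o := by
    intro o
    refine Finset.sum_nonneg fun i' hi' => mul_nonneg (hwa0 i' hi') (ind01_nonneg _)
  have hP0 : ∀ o, 0 ≤ Pv o := by
    intro o
    refine Finset.sum_nonneg fun i' hi' =>
      mul_nonneg (mul_nonneg (hwa0 i' hi') (ind01_nonneg _)) (ind01_nonneg _)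
  have hPL : ∀ o, Pv o ≤ L o := by
    intro o
    refine Finset.sum_le_sum fun i' hi' => ?_
    refine mul_le_mul_of_nonneg_right ?_ (ind01_nonneg _)
    exact mul_le_of_le_one_right (hwa0 i' hi') (ind01_le_one _)
  have hLM : ∀ o, L o = M o := by
    intro o
    rcases o with _ | j
    · have pw : ∀ y : V → Bool,
          ind01 (g y = none)
            = 1 - ind01 (∃ i ∈ (Finset.univ : Finset (Fin (k+1))), F i y) := by
        intro y
        by_cases hex : ∃ i, F i y
        · obtain ⟨i, hFi⟩ := hex
          rw [ind01_of (⟨i, Finset.mem_univ i, hFi⟩ : ∃ i ∈ _, F i y),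
            ind01_of_not (fun h => (hg_none y).1 h i hFi)]
          ring
        · rw [ind01_of ((hg_none y).2 (fun i hFi => hex ⟨i, hFi⟩)),
            ind01_of_not (fun h => hex (by obtain ⟨i, -, hFi⟩ := h; exact ⟨i, hFi⟩))]
          ring
      have la : L none
          = 1 - ∑ i' ∈ ta, wa i' * ind01 (∃ i ∈ (Finset.univ : Finset (Fin (k+1))), F i (xa i')) := by
        simp only [hLdef]
        rw [← hwa1, ← Finset.sum_sub_distrib]
        refine Finset.sum_congr rfl fun i' _ => ?_
        rw [pw (xa i')]; ring
      have lb : M none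
          = 1 - ∑ j' ∈ tb, wb j' * ind01 (∃ i ∈ (Finset.univ : Finset (Fin (k+1))), F i (xb j')) := by
        simp only [hMdef]
        rw [← hwb1, ← Finset.sum_sub_distrib]
        refine Finset.sum_congr rfl fun j' _ => ?_
        rw [pw (xb j')]; ring
      rw [la, lb, hU Finset.univ]
    · have pw : ∀ y : V → Bool, ind01 (g y = some j)
          = ind01 (∃ i ∈ Finset.univ.filter (fun i => j ≤ i), F i y)
            - ind01 (∃ i ∈ Finset.univ.filter (fun i => j < i), F i y) := by
        intro y
        by_cases hgt : ∃ i, j < i ∧ F i y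
        · obtain ⟨i, hji, hFi⟩ := hgt
          rw [ind01_of (⟨i, Finset.mem_filter.2 ⟨Finset.mem_univ i, le_of_lt hji⟩, hFi⟩ :
              ∃ i ∈ _, F i y),
            ind01_of (⟨i, Finset.mem_filter.2 ⟨Finset.mem_univ i, hji⟩, hFi⟩ :
              ∃ i ∈ _, F i y),
            ind01_of_not (fun h => absurd hji (not_lt.2 (((hg_some y j).1 h).2 i hFi)))]
          ring
        · push_neg at hgt
          have h2 : ¬ ∃ i ∈ Finset.univ.filter (fun i => j < i), F i y := by
            rintro ⟨i, hi, hFi⟩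
            exact hgt i (Finset.mem_filter.1 hi).2 hFi
          rw [ind01_of_not h2]
          by_cases hFj : F j y
          · rw [ind01_of (⟨j, Finset.mem_filter.2 ⟨Finset.mem_univ j, le_refl j⟩, hFj⟩ :
                ∃ i ∈ _, F i y),
              ind01_of ((hg_some y j).2
                ⟨hFj, fun i hFi => not_lt.1 (fun hlt => hgt i hlt hFi)⟩)]
            ring
          · rw [ind01_of_not (fun h => hFj ((hg_some y j).1 h).1),
              ind01_of_not (fun h => by
                obtain ⟨i, hi, hFi⟩ := h
                rcases eq_or_lt_of_le (Finset.mem_filter.1 hi).2 with rfl | hlt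
                · exact hFj hFi
                · exact hgt i hlt hFi)]
            ring
      have la : L (some j)
          = (∑ i' ∈ ta, wa i' * ind01 (∃ i ∈ Finset.univ.filter (fun i => j ≤ i), F i (xa i')))
            - ∑ i' ∈ ta, wa i' * ind01 (∃ i ∈ Finset.univ.filter (fun i => j < i), F i (xa i')) := by
        simp only [hLdef]
        rw [← Finset.sum_sub_distrib]
        refine Finset.sum_congr rfl fun i' _ => ?_
        rw [pw (xa i')]; ring
      have lb : M (some j)
          = (∑ j' ∈ tb, wb j' * ind01 (∃ i ∈ Finset.univ.filter (fun i => j ≤ i), F i (xb j')))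
            - ∑ j' ∈ tb, wb j' * ind01 (∃ i ∈ Finset.univ.filter (fun i => j < i), F i (xb j')) := by
        simp only [hMdef]
        rw [← Finset.sum_sub_distrib]
        refine Finset.sum_congr rfl fun j' _ => ?_
        rw [pw (xb j')]; ring
      rw [la, lb, hU _, hU _]
  have hR0 : ∀ o, 0 ≤ R o := by
    intro o
    simp only [hRdef]
    split
    · exact le_refl 0
    · exact div_nonneg (hP0 o) (hL0 o)
  have hR1 : ∀ o, R o ≤ 1 := by
    intro o
    simp only [hRdef]
    split
    · norm_num
    · rename_i h
      rw [div_le_one (lt_of_le_of_ne (hL0 o) (Ne.symm h))]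
      exact hPL o
  have hMR : ∀ o, M o * R o = Pv o := by
    intro o
    rw [← hLM o]
    simp only [hRdef]
    by_cases h : L o = 0
    · rw [if_pos h, h, mul_zero]
      exact (le_antisymm (h ▸ hPL o) (hP0 o)).symm
    · rw [if_neg h]
      field_simp
  have hMR' : ∀ o, M o * (1 - R o) = L o - Pv o := by
    intro o
    rw [mul_one_sub, hMR o, hLM o]
  -- the three transported identities
  have I1 : ∑ j ∈ tb, wb j * R (g (xb j)) = ∑ i' ∈ ta, wa i' * ind01 (xa i' v = true) := by
    have h2 := hga (fun _ => 1)
    simp only [mul_one] at h2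
    rw [hgb R, h2]
    exact Finset.sum_congr rfl fun o _ => hMR o
  have I2 : ∀ i : Fin (k+1),
      ∑ j ∈ tb, wb j * (R (g (xb j)) * ind01 (Good i (g (xb j))))
        = ∑ i' ∈ ta, wa i' * ind01 (xa i' v = true) * ind01 (Good i (g (xa i'))) := by
    intro i
    rw [hgb (fun o => R o * ind01 (Good i o)), hga (fun o => ind01 (Good i o))]
    refine Finset.sum_congr rfl fun o _ => ?_
    rw [← mul_assoc, hMR o]
  have I3 : ∀ i : Fin (k+1),
      ∑ j ∈ tb, wb j * ((1 - R (g (xb j))) * ind01 (Good i (g (xb j))))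
        = ∑ i' ∈ ta, wa i' * ind01 (xa i' v = false) * ind01 (Good i (g (xa i'))) := by
    intro i
    rw [hgb (fun o => (1 - R o) * ind01 (Good i o))]
    have e1 : ∀ i', wa i' * ind01 (xa i' v = false) * ind01 (Good i (g (xa i')))
        = wa i' * ind01 (Good i (g (xa i')))
          - wa i' * ind01 (xa i' v = true) * ind01 (Good i (g (xa i'))) := by
      intro i'
      rw [hbf (xa i' v)]; ring
    rw [Finset.sum_congr rfl (fun i' _ => e1 i'), Finset.sum_sub_distrib,
      hgaL (fun o => ind01 (Good i o)), hga (fun o => ind01 (Good i o)),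
      ← Finset.sum_sub_distrib]
    refine Finset.sum_congr rfl fun o _ => ?_
    rw [← mul_assoc, hMR' o]; ring
  -- build the combined point
  set X : ι₂ × Bool → V → Bool := fun p => Function.update (xb p.1) v p.2 with hXdef
  set wc : ι₂ × Bool → ℝ :=
    fun p => wb p.1 * (if p.2 then R (g (xb p.1)) else 1 - R (g (xb p.1))) with hwcdef
  set tc : Finset (ι₂ × Bool) := tb ×ˢ Finset.univ with htcdef
  have hwc1 : ∑ p ∈ tc, wc p = 1 := by
    rw [htcdef, Finset.sum_product, ← hwb1]
    refine Finset.sum_congr rfl fun j _ => ?_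
    rw [Fintype.sum_bool]
    simp only [hwcdef]
    norm_num
    ring
  have hwc0 : ∀ p ∈ tc, 0 ≤ wc p := by
    rintro ⟨j, bv⟩ hp
    have hj : j ∈ tb := (Finset.mem_product.1 hp).1
    simp only [hwcdef]
    refine mul_nonneg (hwb0 j hj) ?_
    cases bv
    · simp only [if_neg Bool.false_ne_true]
      linarith [hR1 (g (xb j))]
    · simp only [if_pos rfl]
      exact hR0 _
  set c : (↥(Finset.univ : Finset V) → ℝ) × (↥S → ℝ) :=
    tc.centerMass wc (fun p => ptPBS Finset.univ S (X p)) with hcdef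
  have hcmem : c ∈ convexHull ℝ (PBS (Finset.univ : Finset V) S) := by
    rw [hcdef]
    exact tc.centerMass_mem_convexHull hwc0 (by rw [hwc1]; norm_num)
      (fun p _ => ptPBS_mem _ _ hWS (X p))
  have hcc := cm_pt (Finset.univ : Finset V) S tc wc hwc1 X
  have hc1 : ∀ u : V, c.1 ⟨u, Finset.mem_univ u⟩
      = ∑ p ∈ tc, wc p * ind01 (X p u = true) := by
    intro u; rw [hcdef, hcc]
  have hc2 : ∀ (t : SignedEdge V) (ht : t ∈ S), c.2 ⟨t, ht⟩
      = ∑ p ∈ tc, wc p * ind01 (∀ u ∈ t.edge, X p u = t.sign u) := by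
    intro t ht; rw [hcdef, hcc]
  -- node coordinates
  have hnode2 : ∀ u : V, u ≠ v → c.1 ⟨u, Finset.mem_univ u⟩
      = ∑ j ∈ tb, wb j * ind01 (xb j u = true) := by
    intro u huv
    rw [hc1 u, htcdef, Finset.sum_product]
    refine Finset.sum_congr rfl fun j _ => ?_
    rw [Fintype.sum_bool]
    simp only [hwcdef, hXdef]
    rw [Function.update_of_ne huv, Function.update_of_ne huv]
    norm_num
    ring
  have hbullet2 : ∀ u (h2 : u ∈ Finset.univ.erase v),
      c.1 ⟨u, Finset.mem_univ u⟩ = b.1 ⟨u, h2⟩ := by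
    intro u h2
    rw [hnode2 u (Finset.mem_erase.1 h2).1, hb1 u h2]
  have hnodev : c.1 ⟨v, Finset.mem_univ v⟩ = a.1 ⟨v, hv (Fin.last k)⟩ := by
    rw [hc1 v, htcdef, Finset.sum_product, ha1 v (hv (Fin.last k))]
    have step : ∀ j, ∑ bv ∈ (Finset.univ : Finset Bool), wc (j, bv) * ind01 (X (j, bv) v = true)
        = wb j * R (g (xb j)) := by
      intro j
      rw [Fintype.sum_bool]
      simp only [hwcdef, hXdef]
      rw [Function.update_self, Function.update_self, ind01_of rfl,
        ind01_of_not (by simp)]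
      norm_num
    rw [Finset.sum_congr rfl (fun j _ => step j)]
    exact I1
  have hbullet1 : ∀ u (h1 : u ∈ (s (Fin.last k)).edge),
      c.1 ⟨u, Finset.mem_univ u⟩ = a.1 ⟨u, h1⟩ := by
    intro u h1
    by_cases huv : u = v
    · subst huv; exact hnodev
    · have h2 : u ∈ Finset.univ.erase v := Finset.mem_erase.2 ⟨huv, Finset.mem_univ u⟩
      rw [hbullet2 u h2]
      exact (hshareNodes u h1 h2).symm
  -- edge coordinates
  have hedgefree : ∀ (t : SignedEdge V) (ht : t ∈ S), v ∉ t.edge →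
      c.2 ⟨t, ht⟩ = ∑ j ∈ tb, wb j * ind01 (∀ u ∈ t.edge, xb j u = t.sign u) := by
    intro t ht hvt
    rw [hc2 t ht, htcdef, Finset.sum_product]
    refine Finset.sum_congr rfl fun j _ => ?_
    have hiff : ∀ bv : Bool, (∀ u ∈ t.edge, X (j, bv) u = t.sign u)
        ↔ (∀ u ∈ t.edge, xb j u = t.sign u) := by
      intro bv
      have hXu : ∀ u ∈ t.edge, X (j, bv) u = xb j u := by
        intro u hu
        simp only [hXdef]
        exact Function.update_of_ne (by rintro rfl; exact hvt hu) _ _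
      exact forall₂_congr fun u hu => by rw [hXu u hu]
    rw [Fintype.sum_bool, ind01_congr (hiff true), ind01_congr (hiff false)]
    simp only [hwcdef]
    norm_num
    ring
  have hbullet4 : ∀ t (ht : t ∈ S) (h2 : t ∈ removedEdges S v),
      c.2 ⟨t, ht⟩ = b.2 ⟨t, h2⟩ := by
    intro t ht h2
    have hvt : v ∉ t.edge := by
      obtain ⟨hti, -⟩ := Finset.mem_filter.1 h2
      obtain ⟨t', -, rfl⟩ := Finset.mem_image.1 hti
      exact Finset.notMem_erase v _
    rw [hedgefree t ht hvt, hb2 t h2]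
  have hbullet3 : ∀ t (ht : t ∈ S) (h1 : t ∈ edgesAt k s ∪ erasedAt k s v),
      c.2 ⟨t, ht⟩ = a.2 ⟨t, h1⟩ := by
    intro t ht h1
    rcases Finset.mem_union.1 h1 with hE | hP
    · -- t = s i
      obtain ⟨i, -, rfl⟩ := Finset.mem_image.1 hE
      rw [hc2 _ ht, htcdef, Finset.sum_product, ha2 _ h1]
      have hsplit : ∀ y : V → Bool,
          (∀ u ∈ (s i).edge, y u = (s i).sign u) ↔ (y v = (s i).sign v ∧ F i y) := by
        intro y
        constructor
        · intro h
          exact ⟨h v (hv i), fun u hu => h u (Finset.mem_of_mem_erase hu)⟩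
        · rintro ⟨h0, hF⟩ u hu
          rcases eq_or_ne u v with rfl | hne
          · exact h0
          · exact hF u (Finset.mem_erase.2 ⟨hne, hu⟩)
      have hXF : ∀ (j : ι₂) (bv : Bool), F i (X (j, bv)) ↔ F i (xb j) := by
        intro j bv
        refine forall₂_congr fun u hu => ?_
        have : X (j, bv) u = xb j u := by
          simp only [hXdef]
          exact Function.update_of_ne (Finset.mem_erase.1 hu).1 _ _
        rw [this]
      have step : ∀ j, ∑ bv ∈ (Finset.univ : Finset Bool),
          wc (j, bv) * ind01 (∀ u ∈ (s i).edge, X (j, bv) u = (s i).sign u)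
          = wb j * ((if (s i).sign v then R (g (xb j)) else 1 - R (g (xb j)))
              * ind01 (Good i (g (xb j)))) := by
        intro j
        rw [Fintype.sum_bool, ind01_congr (hsplit (X (j, true))),
          ind01_congr (hsplit (X (j, false))), ← ind01_mul, ← ind01_mul,
          ind01_congr (hXF j true), ind01_congr (hXF j false),
          ind01_congr (hFg i (xb j))]
        have hXv : ∀ bv : Bool, X (j, bv) v = bv := by
          intro bv; simp only [hXdef]; exact Function.update_self _ _ _
        rw [hXv true, hXv false]
        cases hsv : (s i).sign v
        · rw [ind01_of_not (show ¬((true : Bool) = false) by decide),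
            ind01_of (show (false : Bool) = false from rfl)]
          simp only [hwcdef]
          norm_num
          try ring
        · rw [ind01_of (show (true : Bool) = true from rfl),
            ind01_of_not (show ¬((false : Bool) = true) by decide)]
          simp only [hwcdef]
          norm_num
          try ring
      rw [Finset.sum_congr rfl (fun j _ => step j)]
      have aRHS : ∑ i' ∈ ta, wa i' * ind01 (∀ u ∈ (s i).edge, xa i' u = (s i).sign u)
          = ∑ i' ∈ ta, wa i' * ind01 (xa i' v = (s i).sign v) * ind01 (Good i (g (xa i'))) := by
        refine Finset.sum_congr rfl fun i' _ => ?_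
        rw [ind01_congr (hsplit (xa i')), ← ind01_mul, ind01_congr (hFg i (xa i')),
          mul_assoc]
      rw [aRHS]
      cases hsv : (s i).sign v
      · simp only [if_neg Bool.false_ne_true]
        exact I3 i
      · simp only [if_pos rfl]
        exact I2 i
    · -- t ∈ erasedAt
      have h2 : t ∈ removedEdges S v := by
        obtain ⟨hti, hc2'⟩ := Finset.mem_filter.1 hP
        obtain ⟨i, -, rfl⟩ := Finset.mem_image.1 hti
        exact Finset.mem_filter.2
          ⟨Finset.mem_image.2 ⟨s i, hmem i, rfl⟩, le_trans one_le_two hc2'⟩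
      rw [hbullet4 t ht h2]
      exact (hshareEdges t h1 h2).symm
  exact ⟨c, hcmem, hbullet1, hbullet2, hbullet3, hbullet4⟩
end
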